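/- Let b = r/N be a rational number with N a positive integer, and let p be a prime with p > (N + sqrt(N^2 + N·|b|))^2. If a is an integer with |a| ≤ 2·sqrt(p) and a ≡ b (mod p) in the sense that p divides N·a − r, then a = b (i.e., N·a = r). -/
import Mathlib


/-- Hasse-bound rigidity: if `b = r/N` is a fixed rational, `p` is a prime exceeding
`(N + √(N² + N|b|))²`, and `a` is an integer in the Hasse range `|a| ≤ 2√p` with
`a ≡ b (mod p)` (meaning `p ∣ N·a − r`), then `a = b`, i.e. `N·a = r`. -/
theorem hasse_rigidity_rat (r : ℤ) (N : ℕ) (hN : 0 < N) (p : ℕ) (hp : p.Prime)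
    (hpK : ((N : ℝ) + Real.sqrt ((N : ℝ) ^ 2 + (N : ℝ) * |(r : ℝ) / (N : ℝ)|)) ^ 2 < (p : ℝ))
    (a : ℤ) (ha : |(a : ℝ)| ≤ 2 * Real.sqrt p)
    (hdvd : (p : ℤ) ∣ (N : ℤ) * a - r) :
    (N : ℤ) * a = r := by
  set s : ℝ := Real.sqrt p with hs_def
  have hNR : (0:ℝ) < N := by exact_mod_cast hN
  have hpR : (0:ℝ) ≤ p := by positivity
  have hs2 : s ^ 2 = p := Real.sq_sqrt hpR
  have hrad : (0:ℝ) ≤ (N : ℝ) ^ 2 + (N : ℝ) * |(r : ℝ) / (N : ℝ)| := by positivity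
  have hK0 : (0:ℝ) ≤ (N : ℝ) + Real.sqrt ((N : ℝ) ^ 2 + (N : ℝ) * |(r : ℝ) / (N : ℝ)|) := by
    positivity
  have hKs : (N : ℝ) + Real.sqrt ((N : ℝ) ^ 2 + (N : ℝ) * |(r : ℝ) / (N : ℝ)|) < s := by
    have := Real.sqrt_lt_sqrt (by positivity) hpK
    rwa [Real.sqrt_sq hK0] at this
  have hsqrt : Real.sqrt ((N : ℝ) ^ 2 + (N : ℝ) * |(r : ℝ) / (N : ℝ)|) < s - N := by
    linarith
  have hsq : (N : ℝ) ^ 2 + (N : ℝ) * |(r : ℝ) / (N : ℝ)| < (s - N) ^ 2 := by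
    have h0 : (0:ℝ) ≤ Real.sqrt ((N : ℝ) ^ 2 + (N : ℝ) * |(r : ℝ) / (N : ℝ)|) :=
      Real.sqrt_nonneg _
    nlinarith [Real.sq_sqrt hrad]
  have habs : |(r : ℝ)| = (N : ℝ) * |(r : ℝ) / (N : ℝ)| := by
    rw [abs_div, abs_of_pos hNR]
    field_simp
  -- key inequality: 2 N s + |r| < p
  have hkey : 2 * (N:ℝ) * s + |(r : ℝ)| < p := by
    rw [habs, ← hs2]; nlinarith
  have hbound : |((N : ℤ) * a - r : ℤ)| < (p : ℤ) := by
    have h1 : |((N : ℤ) * a - r : ℝ)| ≤ (N:ℝ) * |(a:ℝ)| + |(r:ℝ)| := by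
      calc |((N : ℤ) * a - r : ℝ)| ≤ |((N:ℤ) * a : ℝ)| + |(r:ℝ)| := abs_sub _ _
        _ = (N:ℝ) * |(a:ℝ)| + |(r:ℝ)| := by
            push_cast
            rw [abs_mul, abs_of_pos hNR]
    have h2 : (N:ℝ) * |(a:ℝ)| ≤ 2 * (N:ℝ) * s := by nlinarith
    have : |((N : ℤ) * a - r : ℝ)| < (p : ℝ) := by
      calc |((N : ℤ) * a - r : ℝ)| ≤ (N:ℝ) * |(a:ℝ)| + |(r:ℝ)| := h1
        _ ≤ 2 * (N:ℝ) * s + |(r:ℝ)| := by linarith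
        _ < p := hkey
    exact_mod_cast (by push_cast at this ⊢; exact this : |((N : ℤ) * a - r : ℝ)| < (p:ℝ))
  have := Int.eq_zero_of_abs_lt_dvd hdvd hbound
  linarith
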